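/- Fix a positive integer n. If b is a finite Blaschke product of order at most n, then the operator norm of T_b on P satisfies ‖T_b‖ = 1; moreover, for every nonzero r ∈ P satisfying ‖T_b r‖ = ‖r‖, one has T_b r = b·r (the pointwise product, which in this case again lies in P). -/

import Mathlib

open Complex Real Set MeasureTheory Metric

noncomputable section

/-- The unit circle `𝕋 = {z ∈ ℂ : |z| = 1}`. -/
def unitCircleSet : Set ℂ := {z : ℂ | ‖z‖ = 1}

/-- An arc: a closed, connected, proper, nonempty subset of the unit circle. -/
def IsArc (A : Set ℂ) : Prop :=
  A ⊆ unitCircleSet ∧ IsClosed A ∧ IsConnected A ∧ A ≠ unitCircleSet ∧ A.Nonempty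

/-- `b` is a finite Blaschke product of order `n` (as a function on the closed unit disc):
`b(z) = λ ∏_{j} (z - a_j)/(1 - conj(a_j) z)` with `|λ| = 1` and `a_j ∈ 𝔻`. -/
def IsBlaschke (n : ℕ) (b : ℂ → ℂ) : Prop :=
  ∃ (lam : ℂ) (a : Fin n → ℂ), ‖lam‖ = 1 ∧ (∀ j, ‖a j‖ < 1) ∧
    ∀ z : ℂ, ‖z‖ ≤ 1 →
      b z = lam * ∏ j, (z - a j) / (1 - (starRingEnd ℂ) (a j) * z)

/-- The `k`-th Fourier coefficient `(1/2π) ∫_0^{2π} f(e^{it}) e^{-ikt} dt` of a function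
on the unit circle. -/
def fourierCoeffCircle (f : ℂ → ℂ) (k : ℤ) : ℂ :=
  (1 / (2 * π)) * ∫ t in (0:ℝ)..(2 * π),
    f (Complex.exp (t * Complex.I)) * Complex.exp (-((k : ℂ) * t) * Complex.I)

/-- The matrix of the Toeplitz operator `T_f : P → P`, `T_f ξ = π(f ξ)`, in the orthonormal
basis `{ζ^0, …, ζ^n}` of the space `P` of analytic polynomials of degree at most `n`:
its `(j,k)` entry is `⟨T_f ζ^k, ζ^j⟩ = f̂(j-k)`. -/
def toepMatrix (n : ℕ) (f : ℂ → ℂ) : Matrix (Fin (n+1)) (Fin (n+1)) ℂ :=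
  fun j k => fourierCoeffCircle f ((j : ℤ) - (k : ℤ))

/-- The operator norm of a matrix acting on the (finite-dimensional) Hilbert space
`EuclideanSpace ℂ (Fin m)`, which models the operator norm of `T_f` on `P`. -/
def matOpNorm {m : ℕ} (M : Matrix (Fin m) (Fin m) ℂ) : ℝ :=
  ‖LinearMap.toContinuousLinearMap (Matrix.toEuclideanLin M)‖

/-! ### Auxiliary lemmas -/

def EE (k : ℤ) (t : ℝ) : ℂ := Complex.exp ((k:ℂ) * (t:ℝ) * Complex.I)

lemma contEE (k : ℤ) : Continuous (EE k) := by
  unfold EE; fun_prop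

lemma EE_mul (j k : ℤ) (t : ℝ) : EE j t * EE k t = EE (j+k) t := by
  unfold EE; rw [← Complex.exp_add]; congr 1; push_cast; ring

lemma conj_EE (k : ℤ) (t : ℝ) : (starRingEnd ℂ) (EE k t) = EE (-k) t := by
  unfold EE
  rw [← Complex.exp_conj]
  congr 1
  simp [Complex.conj_I]

lemma EE_pow (k : ℕ) (t : ℝ) : EE (k:ℤ) t = (EE 1 t)^k := by
  unfold EE
  rw [← Complex.exp_nat_mul]
  congr 1
  push_cast
  ring

lemma integral_EE (k : ℤ) : (∫ t in (0:ℝ)..(2*π), EE k t) = if k = 0 then (2*π:ℂ) else 0 := by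
  unfold EE
  split_ifs with h
  · norm_num [h]
  · have hc : (k:ℂ) * Complex.I ≠ 0 := by
      simp [Complex.I_ne_zero]
      exact_mod_cast h
    have key := integral_exp_mul_complex (a := (0:ℝ)) (b := 2*π) hc
    rw [show (fun t : ℝ => Complex.exp ((k:ℂ) * (t:ℝ) * Complex.I)) = fun t : ℝ => Complex.exp (((k:ℂ)*Complex.I) * (t:ℝ)) by funext t; ring_nf]
    rw [key]
    have h2 : Complex.exp ((k:ℂ) * Complex.I * (2*π:ℝ)) = 1 := by
      rw [show ((k:ℂ) * Complex.I * (2*π:ℝ)) = (k:ℤ) * (2 * π * Complex.I) by push_cast; ring]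
      exact Complex.exp_int_mul_two_pi_mul_I k
    rw [h2]
    simp

lemma intEE (k : ℤ) {a b : ℝ} : IntervalIntegrable (EE k) MeasureTheory.volume a b :=
  (contEE k).intervalIntegrable _ _

lemma integral_cEE (c : ℂ) (k : ℤ) :
    (∫ t in (0:ℝ)..(2*π), c * EE k t) = if k = 0 then 2*π*c else 0 := by
  rw [intervalIntegral.integral_const_mul, integral_EE]
  split_ifs <;> ring

lemma intervalIntegral_conj {f : ℝ → ℂ} {a b : ℝ} :
    (∫ t in a..b, (starRingEnd ℂ) (f t)) = (starRingEnd ℂ) (∫ t in a..b, f t) := by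
  rw [intervalIntegral.intervalIntegral_eq_integral_uIoc,
    intervalIntegral.intervalIntegral_eq_integral_uIoc, integral_conj]
  split_ifs <;> simp

lemma parsevalEE {N : ℕ} (v w : Fin N → ℂ) :
    (∫ t in (0:ℝ)..(2*π), (∑ k : Fin N, v k * EE k t) * (starRingEnd ℂ) (∑ l : Fin N, w l * EE l t))
    = 2*π * ∑ k, v k * (starRingEnd ℂ) (w k) := by
  have hpt : ∀ t : ℝ, (∑ k : Fin N, v k * EE k t) * (starRingEnd ℂ) (∑ l : Fin N, w l * EE l t)
      = ∑ k : Fin N, ∑ l : Fin N, (v k * (starRingEnd ℂ) (w l)) * EE ((k:ℤ) - (l:ℤ)) t := by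
    intro t
    rw [map_sum, Finset.sum_mul_sum]
    refine Finset.sum_congr rfl fun k _ => Finset.sum_congr rfl fun l _ => ?_
    rw [map_mul, conj_EE,
      show v k * EE k t * ((starRingEnd ℂ) (w l) * EE (-(l:ℤ)) t)
        = (v k * (starRingEnd ℂ) (w l)) * (EE (k:ℤ) t * EE (-(l:ℤ)) t) by ring, EE_mul,
      sub_eq_add_neg]
  calc (∫ t in (0:ℝ)..(2*π), (∑ k : Fin N, v k * EE k t) * (starRingEnd ℂ) (∑ l : Fin N, w l * EE l t))
      = ∫ t in (0:ℝ)..(2*π), ∑ k : Fin N, ∑ l : Fin N,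
          (v k * (starRingEnd ℂ) (w l)) * EE ((k:ℤ) - (l:ℤ)) t := by
        exact intervalIntegral.integral_congr (fun t _ => hpt t)
    _ = ∑ k : Fin N, ∫ t in (0:ℝ)..(2*π), ∑ l : Fin N,
          (v k * (starRingEnd ℂ) (w l)) * EE ((k:ℤ) - (l:ℤ)) t :=
        intervalIntegral.integral_finset_sum (fun k _ =>
          ((continuous_finset_sum Finset.univ (fun l _ =>
            (continuous_const.mul (contEE _)))).intervalIntegrable _ _))
    _ = ∑ k : Fin N, ∑ l : Fin N, ∫ t in (0:ℝ)..(2*π),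
          (v k * (starRingEnd ℂ) (w l)) * EE ((k:ℤ) - (l:ℤ)) t :=
        Finset.sum_congr rfl (fun k _ =>
          intervalIntegral.integral_finset_sum (fun l _ =>
            (continuous_const.mul (contEE _)).intervalIntegrable _ _))
    _ = ∑ k : Fin N, ∑ l : Fin N,
          (if ((k:ℤ) - (l:ℤ)) = 0 then 2*π*(v k * (starRingEnd ℂ) (w l)) else 0) := by
        simp_rw [integral_cEE]
    _ = 2*π * ∑ k, v k * (starRingEnd ℂ) (w k) := by
        rw [Finset.mul_sum]
        refine Finset.sum_congr rfl fun k _ => ?_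
        rw [Finset.sum_eq_single k]
        · simp
        · intro l _ hlk
          rw [if_neg]
          simp only [sub_eq_zero]
          intro h
          exact hlk (by exact_mod_cast Fin.ext (by exact_mod_cast h.symm))
        · simp

lemma polyintEE {N : ℕ} (v : Fin N → ℂ) (j : Fin N) :
    (∫ t in (0:ℝ)..(2*π), (∑ k : Fin N, v k * EE k t) * EE (-(j:ℤ)) t) = 2*π * v j := by
  have hpt : ∀ t : ℝ, (∑ k : Fin N, v k * EE k t) * EE (-(j:ℤ)) t
      = ∑ k : Fin N, v k * EE ((k:ℤ) - (j:ℤ)) t := by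
    intro t
    rw [Finset.sum_mul]
    refine Finset.sum_congr rfl fun k _ => ?_
    rw [mul_assoc, EE_mul, sub_eq_add_neg]
  calc (∫ t in (0:ℝ)..(2*π), (∑ k : Fin N, v k * EE k t) * EE (-(j:ℤ)) t)
      = ∫ t in (0:ℝ)..(2*π), ∑ k : Fin N, v k * EE ((k:ℤ) - (j:ℤ)) t :=
        intervalIntegral.integral_congr (fun t _ => hpt t)
    _ = ∑ k : Fin N, ∫ t in (0:ℝ)..(2*π), v k * EE ((k:ℤ) - (j:ℤ)) t :=
        intervalIntegral.integral_finset_sum (fun k _ =>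
          (continuous_const.mul (contEE _)).intervalIntegrable _ _)
    _ = ∑ k : Fin N, (if ((k:ℤ) - (j:ℤ)) = 0 then 2*π*(v k) else 0) := by
        simp_rw [integral_cEE]
    _ = 2*π * v j := by
        rw [Finset.sum_eq_single j]
        · simp
        · intro l _ hlk
          rw [if_neg]
          simp only [sub_eq_zero]
          intro h
          exact hlk (by exact_mod_cast Fin.ext (by exact_mod_cast h))
        · simp

lemma coeffA {n : ℕ} (b : ℂ → ℂ)
    (hbc : Continuous (fun t : ℝ => b (Complex.exp ((t:ℂ) * Complex.I))))
    (r : Fin (n+1) → ℂ) (j : Fin (n+1)) :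
    (∫ t in (0:ℝ)..(2*π),
      b (Complex.exp ((t:ℂ) * Complex.I)) * (∑ k : Fin (n+1), r k * EE k t) * EE (-(j:ℤ)) t)
    = 2*π * ∑ k : Fin (n+1), toepMatrix n b j k * r k := by
  have hexp : ∀ (k : Fin (n+1)) (t : ℝ),
      Complex.exp (-((((j:ℤ) - (k:ℤ) : ℤ):ℂ) * (t:ℝ)) * Complex.I) = EE ((k:ℤ) - (j:ℤ)) t := by
    intro k t; unfold EE; congr 1; push_cast; ring
  have hpt : ∀ t : ℝ,
      b (Complex.exp ((t:ℂ) * Complex.I)) * (∑ k : Fin (n+1), r k * EE k t) * EE (-(j:ℤ)) t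
      = ∑ k : Fin (n+1), r k * (b (Complex.exp ((t:ℂ) * Complex.I)) * EE ((k:ℤ) - (j:ℤ)) t) := by
    intro t
    rw [mul_assoc, Finset.sum_mul, Finset.mul_sum]
    refine Finset.sum_congr rfl fun k _ => ?_
    rw [mul_assoc, EE_mul, sub_eq_add_neg]
    ring
  have hπ : (2*π:ℂ) ≠ 0 := by
    simp [Complex.ext_iff, Real.pi_ne_zero]
  calc (∫ t in (0:ℝ)..(2*π),
        b (Complex.exp ((t:ℂ) * Complex.I)) * (∑ k : Fin (n+1), r k * EE k t) * EE (-(j:ℤ)) t)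
      = ∫ t in (0:ℝ)..(2*π), ∑ k : Fin (n+1),
          r k * (b (Complex.exp ((t:ℂ) * Complex.I)) * EE ((k:ℤ) - (j:ℤ)) t) :=
        intervalIntegral.integral_congr (fun t _ => hpt t)
    _ = ∑ k : Fin (n+1), ∫ t in (0:ℝ)..(2*π),
          r k * (b (Complex.exp ((t:ℂ) * Complex.I)) * EE ((k:ℤ) - (j:ℤ)) t) :=
        intervalIntegral.integral_finset_sum (fun k _ =>
          (continuous_const.mul (hbc.mul (contEE _))).intervalIntegrable _ _)
    _ = ∑ k : Fin (n+1), r k * ∫ t in (0:ℝ)..(2*π),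
          b (Complex.exp ((t:ℂ) * Complex.I)) * EE ((k:ℤ) - (j:ℤ)) t := by
        simp_rw [intervalIntegral.integral_const_mul]
    _ = 2*π * ∑ k : Fin (n+1), toepMatrix n b j k * r k := by
        rw [Finset.mul_sum]
        refine Finset.sum_congr rfl fun k _ => ?_
        have : (∫ t in (0:ℝ)..(2*π),
            b (Complex.exp ((t:ℂ) * Complex.I)) * EE ((k:ℤ) - (j:ℤ)) t)
            = 2*π * toepMatrix n b j k := by
          show _ = 2*(π:ℂ) * fourierCoeffCircle b ((j:ℤ) - (k:ℤ))
          rw [fourierCoeffCircle, ← mul_assoc, mul_one_div, div_self hπ, one_mul]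
          exact intervalIntegral.integral_congr (fun t _ => by rw [hexp])
        rw [this]; ring

/-- For a Blaschke product `b` of order at most `n`, the Toeplitz operator `T_b` on the space
`P` of analytic polynomials of degree at most `n` has norm `1`, and every nonzero `r ∈ P`
with `‖T_b r‖ = ‖r‖` satisfies `T_b r = b·r` (as functions on the circle). -/
theorem toeplitz_blaschke_norm_one (n : ℕ) (hn : 1 ≤ n) (b : ℂ → ℂ)
    (m : ℕ) (hm : m ≤ n) (hb : IsBlaschke m b) :
    matOpNorm (toepMatrix n b) = 1 ∧
    ∀ r : EuclideanSpace ℂ (Fin (n+1)), r ≠ 0 →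
      ‖Matrix.toEuclideanLin (toepMatrix n b) r‖ = ‖r‖ →
      ∀ z : ℂ, ‖z‖ = 1 →
        b z * ∑ k : Fin (n+1), r k * z ^ (k : ℕ) =
          ∑ k : Fin (n+1), (Matrix.toEuclideanLin (toepMatrix n b) r) k * z ^ (k : ℕ) := by
  classical
  obtain ⟨lam, a, hlam, ha, hbz⟩ := hb
  have hπ : (0:ℝ) < π := Real.pi_pos
  have h2π : (2*π:ℂ) ≠ 0 := by simp [Complex.ext_iff, Real.pi_ne_zero]
  have hE1 : ∀ t : ℝ, EE 1 t = Complex.exp ((t:ℂ) * Complex.I) := by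
    intro t; unfold EE; norm_num
  have habsE : ∀ t : ℝ, ‖EE 1 t‖ = 1 := by
    intro t; rw [hE1]; exact Complex.norm_exp_ofReal_mul_I t
  have hane : ∀ (j : Fin m) (z : ℂ), ‖z‖ = 1 → z - a j ≠ 0 := by
    intro j z hz h0
    have hza : z = a j := sub_eq_zero.mp h0
    have := ha j
    rw [← hza, hz] at this
    exact lt_irrefl 1 this
  have hden : ∀ (j : Fin m) (z : ℂ), ‖z‖ = 1 → 1 - (starRingEnd ℂ) (a j) * z ≠ 0 := by
    intro j z hz h
    have h1 : (starRingEnd ℂ) (a j) * z = 1 := (sub_eq_zero.mp h).symm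
    have h2 : ‖(starRingEnd ℂ) (a j) * z‖ = ‖a j‖ := by
      rw [norm_mul, hz, mul_one, Complex.norm_conj]
    rw [h1] at h2
    simp only [norm_one] at h2
    have := ha j
    rw [← h2] at this
    exact lt_irrefl 1 this
  have hBform : ∀ z : ℂ, ‖z‖ = 1 →
      b z = lam * ∏ j, (z - a j) / (1 - (starRingEnd ℂ) (a j) * z) :=
    fun z hz => hbz z (le_of_eq hz)
  have hbc : Continuous (fun t : ℝ => b (Complex.exp ((t:ℂ) * Complex.I))) := by
    have hfe : (fun t : ℝ => b (Complex.exp ((t:ℂ) * Complex.I)))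
        = fun t => lam * ∏ j, (EE 1 t - a j) / (1 - (starRingEnd ℂ) (a j) * EE 1 t) := by
      funext t; rw [← hE1, hBform _ (habsE t)]
    rw [hfe]
    exact continuous_const.mul (continuous_finset_prod _ (fun j _ =>
      ((contEE 1).sub continuous_const).div
        (continuous_const.sub (continuous_const.mul (contEE 1)))
        (fun t => hden j _ (habsE t))))
  have hBabs : ∀ z : ℂ, ‖z‖ = 1 → ‖b z‖ = 1 := by
    intro z hz
    rw [hBform z hz, norm_mul, hlam, one_mul, norm_prod]
    refine Finset.prod_eq_one (fun j _ => ?_)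
    rw [norm_div]
    have hd : (1 : ℂ) - (starRingEnd ℂ) (a j) * z = z * (starRingEnd ℂ) (z - a j) := by
      rw [map_sub, mul_sub, Complex.mul_conj, Complex.normSq_eq_norm_sq, hz]
      push_cast
      ring
    rw [hd, norm_mul, hz, one_mul, Complex.norm_conj]
    exact div_self (fun h => hane j z hz (by rwa [norm_eq_zero] at h))
  have hBB : ∀ z : ℂ, ‖z‖ = 1 → b z * (starRingEnd ℂ) (b z) = 1 := by
    intro z hz
    rw [Complex.mul_conj, Complex.normSq_eq_norm_sq, hBabs z hz]
    norm_num
  have happ : ∀ (r : EuclideanSpace ℂ (Fin (n+1))) (j : Fin (n+1)),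
      (Matrix.toEuclideanLin (toepMatrix n b) r) j = ∑ k, toepMatrix n b j k * r k := by
    intro r j
    rw [Matrix.toEuclideanLin_apply]
    simp [Matrix.mulVec, dotProduct]
  have hA : ∀ (r : EuclideanSpace ℂ (Fin (n+1))) (j : Fin (n+1)),
      (∫ t in (0:ℝ)..(2*π),
        b (Complex.exp ((t:ℂ) * Complex.I)) * (∑ k : Fin (n+1), r k * EE k t) * EE (-(j:ℤ)) t)
      = 2*π * (Matrix.toEuclideanLin (toepMatrix n b) r) j := by
    intro r j
    rw [coeffA b hbc (fun k => r k) j, happ r j]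
  have contR : ∀ v : Fin (n+1) → ℂ, Continuous (fun t : ℝ => ∑ k : Fin (n+1), v k * EE k t) :=
    fun v => continuous_finset_sum _ fun k _ => continuous_const.mul (contEE _)
  have hnormsq : ∀ v : EuclideanSpace ℂ (Fin (n+1)),
      (∑ k, v k * (starRingEnd ℂ) (v k)) = ((‖v‖^2 : ℝ) : ℂ) := by
    intro v
    have h1 : ‖v‖^2 = ∑ k, Complex.normSq (v k) := by
      rw [EuclideanSpace.norm_eq, Real.sq_sqrt (Finset.sum_nonneg fun k _ => sq_nonneg _)]
      exact Finset.sum_congr rfl fun k _ => by rw [Complex.sq_norm]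
    rw [h1]
    push_cast
    exact Finset.sum_congr rfl fun k _ => Complex.mul_conj (v k)
  have MAIN : ∀ r : EuclideanSpace ℂ (Fin (n+1)),
      (∫ t in (0:ℝ)..(2*π), Complex.normSq
        (b (Complex.exp ((t:ℂ) * Complex.I)) * (∑ k : Fin (n+1), r k * EE k t)
          - ∑ k : Fin (n+1), (Matrix.toEuclideanLin (toepMatrix n b) r) k * EE k t))
      = 2*π*‖r‖^2 - 2*π*‖Matrix.toEuclideanLin (toepMatrix n b) r‖^2 := by
    intro r
    set Tr : EuclideanSpace ℂ (Fin (n+1)) := Matrix.toEuclideanLin (toepMatrix n b) r with hTrdef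
    set g : ℝ → ℂ := fun t =>
      b (Complex.exp ((t:ℂ) * Complex.I)) * (∑ k : Fin (n+1), r k * EE k t) with hgdef
    set S : ℝ → ℂ := fun t => ∑ k : Fin (n+1), Tr k * EE k t with hSdef
    have contg : Continuous g := hbc.mul (contR _)
    have contS : Continuous S := contR _
    have contcg : Continuous (fun t => (starRingEnd ℂ) (g t)) := Complex.continuous_conj.comp contg
    have contcS : Continuous (fun t => (starRingEnd ℂ) (S t)) := Complex.continuous_conj.comp contS
    have h3 : (∫ t in (0:ℝ)..(2*π), g t * (starRingEnd ℂ) (S t))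
        = 2*π * ∑ k, Tr k * (starRingEnd ℂ) (Tr k) := by
      have hpt : ∀ t : ℝ, g t * (starRingEnd ℂ) (S t)
          = ∑ l : Fin (n+1), (starRingEnd ℂ) (Tr l) * (g t * EE (-(l:ℤ)) t) := by
        intro t
        rw [hSdef]
        simp only [map_sum, map_mul, conj_EE, Finset.mul_sum]
        exact Finset.sum_congr rfl fun l _ => by ring
      calc (∫ t in (0:ℝ)..(2*π), g t * (starRingEnd ℂ) (S t))
          = ∫ t in (0:ℝ)..(2*π), ∑ l : Fin (n+1), (starRingEnd ℂ) (Tr l) * (g t * EE (-(l:ℤ)) t) :=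
            intervalIntegral.integral_congr fun t _ => hpt t
        _ = ∑ l : Fin (n+1), ∫ t in (0:ℝ)..(2*π), (starRingEnd ℂ) (Tr l) * (g t * EE (-(l:ℤ)) t) :=
            intervalIntegral.integral_finset_sum (fun l _ =>
              (continuous_const.mul (contg.mul (contEE _))).intervalIntegrable _ _)
        _ = ∑ l : Fin (n+1), (starRingEnd ℂ) (Tr l) * (2*π * Tr l) := by
            refine Finset.sum_congr rfl fun l _ => ?_
            rw [intervalIntegral.integral_const_mul, hgdef, hA r l, hTrdef]
        _ = 2*π * ∑ k, Tr k * (starRingEnd ℂ) (Tr k) := by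
            rw [Finset.mul_sum]
            exact Finset.sum_congr rfl fun k _ => by ring
    have h2 : (∫ t in (0:ℝ)..(2*π), S t * (starRingEnd ℂ) (S t))
        = 2*π * ∑ k, Tr k * (starRingEnd ℂ) (Tr k) := parsevalEE (fun k => Tr k) (fun k => Tr k)
    have h1 : (∫ t in (0:ℝ)..(2*π), g t * (starRingEnd ℂ) (g t))
        = 2*π * ∑ k, r k * (starRingEnd ℂ) (r k) := by
      have hpt : ∀ t : ℝ, g t * (starRingEnd ℂ) (g t)
          = (∑ k : Fin (n+1), r k * EE k t) * (starRingEnd ℂ) (∑ l : Fin (n+1), r l * EE l t) := by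
        intro t
        rw [hgdef]
        simp only [map_mul]
        have hb1 : b (Complex.exp ((t:ℂ) * Complex.I))
            * (starRingEnd ℂ) (b (Complex.exp ((t:ℂ) * Complex.I))) = 1 :=
          hBB _ (by rw [← hE1]; exact habsE t)
        calc b (Complex.exp ((t:ℂ) * Complex.I)) * (∑ k : Fin (n+1), r k * EE k t) *
              ((starRingEnd ℂ) (b (Complex.exp ((t:ℂ) * Complex.I)))
                * (starRingEnd ℂ) (∑ k : Fin (n+1), r k * EE k t))
            = (b (Complex.exp ((t:ℂ) * Complex.I))
                * (starRingEnd ℂ) (b (Complex.exp ((t:ℂ) * Complex.I))))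
              * ((∑ k : Fin (n+1), r k * EE k t)
                * (starRingEnd ℂ) (∑ k : Fin (n+1), r k * EE k t)) := by ring
          _ = _ := by rw [hb1, one_mul]
      rw [intervalIntegral.integral_congr (fun t _ => hpt t),
        parsevalEE (fun k => r k) (fun k => r k)]
    have h4 : (∫ t in (0:ℝ)..(2*π), S t * (starRingEnd ℂ) (g t))
        = 2*π * ∑ k, Tr k * (starRingEnd ℂ) (Tr k) := by
      have hpt : ∀ t : ℝ, S t * (starRingEnd ℂ) (g t)
          = (starRingEnd ℂ) (g t * (starRingEnd ℂ) (S t)) := by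
        intro t
        simp only [map_mul, Complex.conj_conj]
        ring
      rw [intervalIntegral.integral_congr (fun t _ => hpt t), intervalIntegral_conj, h3]
      have hc2π : (starRingEnd ℂ) (2*(π:ℂ)) = 2*(π:ℂ) := by
        rw [show ((2:ℂ)*(π:ℂ)) = ((2*π:ℝ):ℂ) by push_cast; ring, Complex.conj_ofReal]
      rw [map_mul, hc2π, map_sum]
      congr 1
      exact Finset.sum_congr rfl fun k _ => by simp only [map_mul, Complex.conj_conj]; ring
    have hsplit : ∀ t : ℝ, ((Complex.normSq (g t - S t) : ℝ) : ℂ)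
        = g t * (starRingEnd ℂ) (g t) - g t * (starRingEnd ℂ) (S t)
          - S t * (starRingEnd ℂ) (g t) + S t * (starRingEnd ℂ) (S t) := by
      intro t
      rw [← Complex.mul_conj (g t - S t), map_sub]
      ring
    have hint : ((∫ t in (0:ℝ)..(2*π), Complex.normSq (g t - S t) : ℝ) : ℂ)
        = 2*π * ∑ k, r k * (starRingEnd ℂ) (r k) - 2*π * ∑ k, Tr k * (starRingEnd ℂ) (Tr k) := by
      rw [← intervalIntegral.integral_ofReal,
        intervalIntegral.integral_congr (fun t _ => hsplit t)]
      rw [intervalIntegral.integral_add (f := fun t => g t * (starRingEnd ℂ) (g t) - g t * (starRingEnd ℂ) (S t)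
          - S t * (starRingEnd ℂ) (g t)) (g := fun t => S t * (starRingEnd ℂ) (S t)) ((((contg.mul contcg).sub (contg.mul contcS)).sub
          (contS.mul contcg)).intervalIntegrable _ _) ((contS.mul contcS).intervalIntegrable _ _),
        intervalIntegral.integral_sub (f := fun t => g t * (starRingEnd ℂ) (g t) - g t * (starRingEnd ℂ) (S t))
          (g := fun t => S t * (starRingEnd ℂ) (g t)) (((contg.mul contcg).sub
          (contg.mul contcS)).intervalIntegrable _ _) ((contS.mul contcg).intervalIntegrable _ _),
        intervalIntegral.integral_sub (f := fun t => g t * (starRingEnd ℂ) (g t))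
          (g := fun t => g t * (starRingEnd ℂ) (S t)) ((contg.mul contcg).intervalIntegrable _ _)
          ((contg.mul contcS).intervalIntegrable _ _)]
      rw [h1, h2, h3, h4]
      ring
    rw [hnormsq r, hnormsq Tr] at hint
    have : ((∫ t in (0:ℝ)..(2*π), Complex.normSq (g t - S t) : ℝ) : ℂ)
        = ((2*π*‖r‖^2 - 2*π*‖Tr‖^2 : ℝ) : ℂ) := by
      rw [hint]
      push_cast
      ring
    exact_mod_cast this
  have hle : ∀ r : EuclideanSpace ℂ (Fin (n+1)),
      ‖Matrix.toEuclideanLin (toepMatrix n b) r‖ ≤ ‖r‖ := by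
    intro r
    have h0 : (0:ℝ) ≤ 2*π*‖r‖^2 - 2*π*‖Matrix.toEuclideanLin (toepMatrix n b) r‖^2 := by
      rw [← MAIN r]
      exact intervalIntegral.integral_nonneg (by positivity)
        (fun t _ => Complex.normSq_nonneg _)
    have hsq : ‖Matrix.toEuclideanLin (toepMatrix n b) r‖^2 ≤ ‖r‖^2 := by nlinarith [Real.pi_pos]
    calc ‖Matrix.toEuclideanLin (toepMatrix n b) r‖
        = √(‖Matrix.toEuclideanLin (toepMatrix n b) r‖^2) := (Real.sqrt_sq (norm_nonneg _)).symm
      _ ≤ √(‖r‖^2) := Real.sqrt_le_sqrt hsq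
      _ = ‖r‖ := Real.sqrt_sq (norm_nonneg _)
  -- the extremal vector r0
  set Q : Polynomial ℂ := ∏ j : Fin m, (1 - Polynomial.C ((starRingEnd ℂ) (a j)) * Polynomial.X)
    with hQdef
  set P : Polynomial ℂ := Polynomial.C lam * ∏ j : Fin m, (Polynomial.X - Polynomial.C (a j))
    with hPdef
  have hdeg1 : ∀ j : Fin m,
      (1 - Polynomial.C ((starRingEnd ℂ) (a j)) * Polynomial.X).natDegree ≤ 1 := by
    intro j
    refine le_trans (Polynomial.natDegree_sub_le _ _) ?_
    simp only [Polynomial.natDegree_one, max_le_iff]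
    exact ⟨Nat.zero_le _, le_trans (Polynomial.natDegree_C_mul_le _ _) Polynomial.natDegree_X_le⟩
  have hQdeg : Q.natDegree ≤ n := by
    refine le_trans (le_trans (Polynomial.natDegree_prod_le _ _) ?_) hm
    have hs : (∑ j : Fin m,
        (1 - Polynomial.C ((starRingEnd ℂ) (a j)) * Polynomial.X).natDegree)
        ≤ ∑ _j : Fin m, 1 := Finset.sum_le_sum fun j _ => hdeg1 j
    simpa using hs
  have hPdeg : P.natDegree ≤ n := by
    refine le_trans (Polynomial.natDegree_mul_le) (le_trans ?_ hm)
    rw [Polynomial.natDegree_C, zero_add]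
    refine le_trans (Polynomial.natDegree_prod_le _ _) ?_
    have hs : (∑ j : Fin m, (Polynomial.X - Polynomial.C (a j)).natDegree)
        ≤ ∑ _j : Fin m, 1 :=
      Finset.sum_le_sum fun j _ => le_of_eq (Polynomial.natDegree_X_sub_C (a j))
    simpa using hs
  set r0 : EuclideanSpace ℂ (Fin (n+1)) := WithLp.toLp 2 (fun k : Fin (n+1) => Q.coeff k) with hr0def
  have hr00 : r0 0 = 1 := by
    show Q.coeff ((0 : Fin (n+1)) : ℕ) = 1
    rw [show ((0 : Fin (n+1)) : ℕ) = 0 by simp, Polynomial.coeff_zero_eq_eval_zero, hQdef,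
      Polynomial.eval_prod]
    simp
  have hr0 : r0 ≠ 0 := by
    intro h
    have h0 : r0 0 = 0 := by rw [h]; rfl
    rw [hr00] at h0
    exact one_ne_zero h0
  have heval : ∀ (p : Polynomial ℂ), p.natDegree ≤ n → ∀ t : ℝ,
      (∑ k : Fin (n+1), p.coeff k * EE k t) = p.eval (EE 1 t) := by
    intro p hp t
    rw [Polynomial.eval_eq_sum_range' (Nat.lt_succ_of_le hp),
      ← Fin.sum_univ_eq_sum_range (fun i => p.coeff i * EE 1 t ^ i)]
    exact Finset.sum_congr rfl fun k _ => by rw [EE_pow]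
  have hbq : ∀ t : ℝ, b (Complex.exp ((t:ℂ) * Complex.I)) * Q.eval (EE 1 t) = P.eval (EE 1 t) := by
    intro t
    have hne : (∏ j, (1 - (starRingEnd ℂ) (a j) * EE 1 t)) ≠ 0 :=
      Finset.prod_ne_zero_iff.mpr (fun j _ => hden j _ (habsE t))
    rw [← hE1, hBform _ (habsE t), hQdef, hPdef]
    simp only [Polynomial.eval_mul, Polynomial.eval_prod, Polynomial.eval_sub,
      Polynomial.eval_one, Polynomial.eval_C, Polynomial.eval_X]
    rw [Finset.prod_div_distrib, mul_assoc, div_mul_cancel₀ _ hne]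
  have hTr0 : ∀ j : Fin (n+1), (Matrix.toEuclideanLin (toepMatrix n b) r0) j = P.coeff j := by
    intro j
    have h1 := hA r0 j
    have h2 : ∀ t : ℝ, b (Complex.exp ((t:ℂ) * Complex.I))
        * (∑ k : Fin (n+1), r0 k * EE k t) * EE (-(j:ℤ)) t
        = (∑ k : Fin (n+1), P.coeff k * EE k t) * EE (-(j:ℤ)) t := by
      intro t
      rw [show (∑ k : Fin (n+1), r0 k * EE k t) = Q.eval (EE 1 t) from heval Q hQdeg t,
        hbq t, heval P hPdeg t]
    rw [intervalIntegral.integral_congr (fun t _ => h2 t), polyintEE] at h1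
    exact (mul_left_cancel₀ h2π h1).symm
  have hr0eq : ‖Matrix.toEuclideanLin (toepMatrix n b) r0‖ = ‖r0‖ := by
    have h0 := MAIN r0
    have hzero : ∀ t : ℝ, Complex.normSq
        (b (Complex.exp ((t:ℂ) * Complex.I)) * (∑ k : Fin (n+1), r0 k * EE k t)
          - ∑ k : Fin (n+1), (Matrix.toEuclideanLin (toepMatrix n b) r0) k * EE k t) = 0 := by
      intro t
      have he : (∑ k : Fin (n+1), (Matrix.toEuclideanLin (toepMatrix n b) r0) k * EE k t)
          = P.eval (EE 1 t) := by
        rw [show (∑ k : Fin (n+1), (Matrix.toEuclideanLin (toepMatrix n b) r0) k * EE k t)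
            = ∑ k : Fin (n+1), P.coeff k * EE k t from
          Finset.sum_congr rfl fun k _ => by rw [hTr0 k], heval P hPdeg t]
      rw [he, heval Q hQdeg t, hbq t]
      simp
    rw [intervalIntegral.integral_congr (g := fun _ => (0:ℝ)) (fun t _ => hzero t)] at h0
    simp only [intervalIntegral.integral_zero] at h0
    have hsq : ‖Matrix.toEuclideanLin (toepMatrix n b) r0‖^2 = ‖r0‖^2 := by
      have h2πr : (0:ℝ) < 2*π := by positivity
      nlinarith
    calc ‖Matrix.toEuclideanLin (toepMatrix n b) r0‖
        = √(‖Matrix.toEuclideanLin (toepMatrix n b) r0‖^2) :=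
          (Real.sqrt_sq (norm_nonneg _)).symm
      _ = √(‖r0‖^2) := by rw [hsq]
      _ = ‖r0‖ := Real.sqrt_sq (norm_nonneg _)
  constructor
  · rw [matOpNorm]
    refine le_antisymm ?_ ?_
    · refine ContinuousLinearMap.opNorm_le_bound _ zero_le_one (fun r => ?_)
      rw [one_mul]
      simpa [LinearMap.coe_toContinuousLinearMap'] using hle r
    · have hTle := ContinuousLinearMap.le_opNorm
        (LinearMap.toContinuousLinearMap (Matrix.toEuclideanLin (toepMatrix n b))) r0
      simp only [LinearMap.coe_toContinuousLinearMap'] at hTle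
      rw [hr0eq] at hTle
      have hpos : 0 < ‖r0‖ := norm_pos_iff.mpr hr0
      exact le_of_mul_le_mul_right (by rw [one_mul]; exact hTle) hpos
  · intro r hr hnorm z hz
    have h0 : (∫ t in (0:ℝ)..(2*π), Complex.normSq
        (b (Complex.exp ((t:ℂ) * Complex.I)) * (∑ k : Fin (n+1), r k * EE k t)
          - ∑ k : Fin (n+1), (Matrix.toEuclideanLin (toepMatrix n b) r) k * EE k t)) = 0 := by
      rw [MAIN r, hnorm]
      ring
    set F : ℝ → ℝ := fun t => Complex.normSq
        (b (Complex.exp ((t:ℂ) * Complex.I)) * (∑ k : Fin (n+1), r k * EE k t)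
          - ∑ k : Fin (n+1), (Matrix.toEuclideanLin (toepMatrix n b) r) k * EE k t) with hFdef
    have contF : Continuous F :=
      Complex.continuous_normSq.comp ((hbc.mul (contR _)).sub (contR _))
    have hae : F =ᵐ[MeasureTheory.volume.restrict (Ioc (0:ℝ) (2*π))] 0 :=
      (intervalIntegral.integral_eq_zero_iff_of_le_of_nonneg_ae (by positivity)
        (Filter.Eventually.of_forall fun t => Complex.normSq_nonneg _)
        (contF.intervalIntegrable _ _)).mp h0
    have heqon : EqOn F 0 (Ioc (0:ℝ) (2*π)) := by
      refine Measure.eqOn_of_ae_eq hae contF.continuousOn continuousOn_const ?_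
      rw [interior_Ioc, closure_Ioo (by positivity : (0:ℝ) ≠ 2*π)]
      exact Ioc_subset_Icc_self
    obtain ⟨t, ht, hzt⟩ : ∃ t ∈ Ioc (0:ℝ) (2*π), Complex.exp ((t:ℂ) * Complex.I) = z := by
      have hz1 : Complex.exp ((Complex.arg z : ℂ) * Complex.I) = z := by
        have h := Complex.norm_mul_exp_arg_mul_I z
        rwa [hz, Complex.ofReal_one, one_mul] at h
      rcases le_or_gt (Complex.arg z) 0 with hc | hc
      · refine ⟨Complex.arg z + 2*π,
          ⟨by nlinarith [Complex.neg_pi_lt_arg z], by linarith⟩, ?_⟩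
        push_cast
        rw [add_mul, Complex.exp_add, hz1,
          show ((2:ℂ)*(π:ℂ)*Complex.I) = 2*π*Complex.I by norm_num, Complex.exp_two_pi_mul_I,
          mul_one]
      · exact ⟨Complex.arg z, ⟨hc, by nlinarith [Complex.arg_le_pi z]⟩, hz1⟩
    have hFt : F t = 0 := heqon ht
    rw [hFdef] at hFt
    have hsub : b (Complex.exp ((t:ℂ) * Complex.I)) * (∑ k : Fin (n+1), r k * EE k t)
        - (∑ k : Fin (n+1), (Matrix.toEuclideanLin (toepMatrix n b) r) k * EE k t) = 0 :=
      Complex.normSq_eq_zero.mp hFt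
    have hEEz : ∀ k : Fin (n+1), EE (k:ℤ) t = z ^ (k:ℕ) := by
      intro k
      rw [EE_pow, hE1, hzt]
    rw [hzt] at hsub
    simp_rw [hEEz] at hsub
    exact sub_eq_zero.mp hsub
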